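/- Let T = (P, D) be a σ-consistent probabilistic default theory and KB such that P ∪ D ∪ {KB} is satisfiable. Then a probabilistic interpretation Pr is a z-minimal model of P ∪ {KB} iff Pr is a model of P ∪ D ∪ {KB}. Hence z-entailment coincides with logical entailment from P ∪ D ∪ {KB}: KB ∼z F iff P ∪ D ∪ {KB} ⊨ F. -/

import Mathlib

open scoped Classical

/-- Classical propositional formulas over atoms `α`. -/
inductive PForm (α : Type) where
  | atom : α → PForm α
  | fls : PForm α
  | tru : PForm α
  | neg : PForm α → PForm α
  | conj : PForm α → PForm α → PForm α

/-- Satisfaction of a classical formula in a possible world `I : α → Bool`. -/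
def PForm.sat {α : Type} (I : α → Bool) : PForm α → Bool
  | .atom a => I a
  | .fls => false
  | .tru => true
  | .neg φ => !(PForm.sat I φ)
  | .conj φ ψ => PForm.sat I φ && PForm.sat I ψ

/-- Material implication. -/
def PForm.imp {α : Type} (φ ψ : PForm α) : PForm α := .neg (.conj φ (.neg ψ))

/-- A probabilistic interpretation: a probability function on possible worlds. -/
structure PInterp (α : Type) [Fintype α] [DecidableEq α] where
  p : (α → Bool) → ℝ
  nonneg : ∀ I, 0 ≤ p I
  sum_one : ∑ I : α → Bool, p I = 1

variable {α : Type} [Fintype α] [DecidableEq α]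

/-- Probability of a classical formula. -/
noncomputable def PInterp.prob (Pr : PInterp α) (φ : PForm α) : ℝ :=
  ∑ I ∈ Finset.univ.filter (fun I : α → Bool => PForm.sat I φ = true), Pr.p I

/-- Conditional probability `Pr(ψ|φ)`. -/
noncomputable def PInterp.cond (Pr : PInterp α) (ψ φ : PForm α) : ℝ :=
  Pr.prob (PForm.conj ψ φ) / Pr.prob φ

/-- A conditional constraint `(cons|ante)[lo,up]` (strict or defeasible). -/
structure CC (α : Type) where
  cons : PForm α
  ante : PForm α
  lo : ℝ
  up : ℝ

/-- Truth of a conditional constraint in a probabilistic interpretation. -/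
def satCC (Pr : PInterp α) (c : CC α) : Prop :=
  Pr.prob c.ante = 0 ∨ (c.lo ≤ Pr.cond c.cons c.ante ∧ Pr.cond c.cons c.ante ≤ c.up)

/-- Probabilistic formulas: closure of conditional constraints under ¬ and ∧. -/
inductive ProbForm (α : Type) where
  | cc : CC α → ProbForm α
  | neg : ProbForm α → ProbForm α
  | conj : ProbForm α → ProbForm α → ProbForm α

/-- Truth of probabilistic formulas. -/
def psat (Pr : PInterp α) : ProbForm α → Prop
  | .cc c => satCC Pr c
  | .neg F => ¬ psat Pr F
  | .conj F G => psat Pr F ∧ psat Pr G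

/-- `Pr` is a model of a set of probabilistic formulas. -/
def modelsSet (Pr : PInterp α) (F : Set (ProbForm α)) : Prop := ∀ G ∈ F, psat Pr G

/-- `Pr` is a model of a finite set of conditional constraints. -/
def modelsF (Pr : PInterp α) (S : Finset (CC α)) : Prop := ∀ c ∈ S, satCC Pr c

/-- `Pr` verifies a default. -/
def verifies (Pr : PInterp α) (c : CC α) : Prop :=
  Pr.prob c.ante = 1 ∧ c.lo ≤ Pr.cond c.cons c.ante ∧ Pr.cond c.cons c.ante ≤ c.up

/-- `D` tolerates `d` under `P`. -/
def tolerates (P D : Finset (CC α)) (d : CC α) : Prop :=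
  ∃ Pr : PInterp α, modelsF Pr (P ∪ D) ∧ verifies Pr d

/-- `D` is under `P` in conflict with `d`. -/
def inConflict (P D : Finset (CC α)) (d : CC α) : Prop := ¬ tolerates P D d

/-- A default ranking admissible with `T = (P, D)`. -/
def rankAdmissible (P D : Finset (CC α)) (σ : CC α → ℕ) : Prop :=
  ∀ D' ⊆ D, ∀ d ∈ D, inConflict P D' d → ∃ d' ∈ D', σ d' < σ d

/-- A priority ordering admissible with `T = (P, D)`. -/
def precAdmissible (P D : Finset (CC α)) (prec : CC α → CC α → Prop) : Prop :=
  ∀ D' ⊆ D, ∀ d ∈ D, inConflict P D' d → ∃ d' ∈ D', prec d' d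

/-- The remainders in the construction of the z-partition. -/
noncomputable def restD (P D : Finset (CC α)) : ℕ → Finset (CC α)
  | 0 => D
  | i + 1 => (restD P D i).filter (fun d => ¬ tolerates P (restD P D i) d)

/-- The `i`-th member `D_i` of the z-partition. -/
noncomputable def stratum (P D : Finset (CC α)) (i : ℕ) : Finset (CC α) :=
  (restD P D i).filter (fun d => tolerates P (restD P D i) d)

/-- σ-consistency: the z-partition covers all of `D`. -/
def zConsistent (P D : Finset (CC α)) : Prop := ∀ d ∈ D, ∃ i, d ∈ stratum P D i

/-- The default ranking `z` induced by the z-partition. -/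
noncomputable def zrank (P D : Finset (CC α)) (d : CC α) : ℕ :=
  sInf {i | d ∈ stratum P D i}

/-- The probability ranking `κ^z`. -/
noncomputable def kappaZ (P D : Finset (CC α)) (Pr : PInterp α) : ℕ∞ :=
  if ¬ modelsF Pr P then ⊤
  else if modelsF Pr (P ∪ D) then 0
  else 1 + ((D.filter (fun d => ¬ satCC Pr d)).sup (fun d => (zrank P D d : ℕ∞)))

/-- Extension of `κ^z` to strict probabilistic formulas. -/
noncomputable def kappaZF (P D : Finset (CC α)) (F : ProbForm α) : ℕ∞ :=
  sInf {n : ℕ∞ | ∃ Pr : PInterp α, psat Pr F ∧ kappaZ P D Pr = n}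

/-- Number of defaults of the stratum `D_i` satisfied by `Pr`. -/
noncomputable def lexCard (P D : Finset (CC α)) (i : ℕ) (Pr : PInterp α) : ℕ :=
  ((stratum P D i).filter (fun d => satCC Pr d)).card

/-- Lexicographic preference induced by the z-partition. -/
def lexPref (P D : Finset (CC α)) (Pr Pr' : PInterp α) : Prop :=
  ∃ i, lexCard P D i Pr' < lexCard P D i Pr ∧
    ∀ j, i < j → lexCard P D j Pr = lexCard P D j Pr'

/-- `≺`-preference on probabilistic interpretations. -/
def precPref (D : Finset (CC α)) (prec : CC α → CC α → Prop)
    (Pr Pr' : PInterp α) : Prop :=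
  (D.filter fun d => ¬ satCC Pr d) ≠ (D.filter fun d => ¬ satCC Pr' d) ∧
  ∀ d ∈ D, ¬ satCC Pr d → satCC Pr' d →
    ∃ d' ∈ D, prec d d' ∧ satCC Pr d' ∧ ¬ satCC Pr' d'

/-- Convex combination of two probabilistic interpretations. -/
noncomputable def mix (a : ℝ) (h0 : 0 ≤ a) (h1 : a ≤ 1) (Pr Pr' : PInterp α) :
    PInterp α where
  p I := a * Pr.p I + (1 - a) * Pr'.p I
  nonneg I := add_nonneg (mul_nonneg h0 (Pr.nonneg I))
    (mul_nonneg (by linarith) (Pr'.nonneg I))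
  sum_one := by
    rw [Finset.sum_add_distrib, ← Finset.mul_sum, ← Finset.mul_sum,
      Pr.sum_one, Pr'.sum_one]
    ring

theorem stmt16 {α : Type} [Fintype α] [DecidableEq α]
    (P D : Finset (CC α)) (hcons : zConsistent P D) (KB : ProbForm α)
    (hsat : ∃ Pr : PInterp α, modelsF Pr (P ∪ D) ∧ psat Pr KB) :
    (∀ Pr : PInterp α,
      ((modelsF Pr P ∧ psat Pr KB) ∧
        ∀ Pr' : PInterp α, modelsF Pr' P ∧ psat Pr' KB →
          ¬ kappaZ P D Pr' < kappaZ P D Pr)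
      ↔ (modelsF Pr (P ∪ D) ∧ psat Pr KB)) ∧
    (∀ F : ProbForm α,
      (∀ Pr : PInterp α,
        ((modelsF Pr P ∧ psat Pr KB) ∧
          ∀ Pr' : PInterp α, modelsF Pr' P ∧ psat Pr' KB →
            ¬ kappaZ P D Pr' < kappaZ P D Pr) →
        psat Pr F)
      ↔ (∀ Pr : PInterp α, modelsF Pr (P ∪ D) ∧ psat Pr KB → psat Pr F)) := by
  obtain ⟨Pr0, hPr0, hKB0⟩ := hsat
  have hP0 : modelsF Pr0 P := fun c hc => hPr0 c (Finset.mem_union_left _ hc)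
  have hk0 : kappaZ P D Pr0 = 0 := by unfold kappaZ; simp [hP0, hPr0]
  have main : ∀ Pr : PInterp α,
      ((modelsF Pr P ∧ psat Pr KB) ∧
        ∀ Pr' : PInterp α, modelsF Pr' P ∧ psat Pr' KB →
          ¬ kappaZ P D Pr' < kappaZ P D Pr)
      ↔ (modelsF Pr (P ∪ D) ∧ psat Pr KB) := by
    intro Pr
    constructor
    · rintro ⟨⟨hP, hKB⟩, hmin⟩
      have hle := hmin Pr0 ⟨hP0, hKB0⟩
      rw [hk0] at hle
      have hz : kappaZ P D Pr = 0 := by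
        rcases eq_or_lt_of_le (zero_le : 0 ≤ kappaZ P D Pr) with h | h
        · exact h.symm
        · exact absurd h hle
      by_cases hPD : modelsF Pr (P ∪ D)
      · exact ⟨hPD, hKB⟩
      · exfalso
        unfold kappaZ at hz
        simp only [hP, not_true, if_false, hPD, if_neg, if_true, not_false_iff] at hz
        have : (1 : ℕ∞) ≤ 1 + ((D.filter (fun d => ¬ satCC Pr d)).sup
            (fun d => (zrank P D d : ℕ∞))) := le_self_add
        rw [hz] at this
        exact absurd this (by norm_num)
    · rintro ⟨hPD, hKB⟩
      have hP : modelsF Pr P := fun c hc => hPD c (Finset.mem_union_left _ hc)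
      refine ⟨⟨hP, hKB⟩, fun Pr' _ => ?_⟩
      have hz : kappaZ P D Pr = 0 := by unfold kappaZ; simp [hP, hPD]
      simp [hz]
  exact ⟨main, fun F =>
    ⟨fun h Pr hPr => h Pr ((main Pr).mpr hPr),
     fun h Pr hPr => h Pr ((main Pr).mp hPr)⟩⟩
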